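/- Let H be a real Hilbert space, S bounded self-adjoint nonpositive, A bounded antisymmetric, L = A + γS with γ > 0, λ > 0, and f ∈ H with S f = -f. Then <f, (λ - L)^{-1} f> ≤ <f, f>/(λ + γ). -/

import Mathlib

open scoped RealInnerProductSpace

/-- if `S f = -f` then the resolvent quadratic form is bounded by
`<f,f>/(λ+γ)`. Here `R = (λ - L)⁻¹` with `L = A + γS`. -/
theorem resolvent_upper_bound {H : Type*} [NormedAddCommGroup H]
    [InnerProductSpace ℝ H] [CompleteSpace H]
    (S A : H →L[ℝ] H) (hS : IsSelfAdjoint S) (hSneg : ∀ u : H, ⟪S u, u⟫ ≤ 0)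
    (hA : ∀ u v : H, ⟪A u, v⟫ = -⟪u, A v⟫)
    (γ lam : ℝ) (hγ : 0 < γ) (hlam : 0 < lam)
    (R : H →L[ℝ] H)
    (hR1 : ∀ v, lam • R v - (A (R v) + γ • S (R v)) = v)
    (hR2 : ∀ v, R (lam • v - (A v + γ • S v)) = v)
    (f : H) (hf : S f = -f) :
    ⟪f, R f⟫ ≤ ⟪f, f⟫ / (lam + γ) := by
  have hsym : ∀ x y : H, ⟪S x, y⟫ = ⟪x, S y⟫ :=
    (ContinuousLinearMap.isSelfAdjoint_iff_isSymmetric.mp hS)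
  set u := R f with hu
  have hres : lam • u - (A u + γ • S u) = f := hR1 f
  have hAu : ⟪A u, u⟫ = 0 := by
    have h := hA u u
    have h2 := real_inner_comm (A u) u
    linarith
  have h1 : ⟪f, u⟫ = lam * ⟪u, u⟫ - γ * ⟪S u, u⟫ := by
    rw [← hres]
    simp [inner_sub_left, inner_add_left, real_inner_smul_left, hAu]
  have hpos : 0 < lam + γ := by linarith
  set g : H := (lam + γ)⁻¹ • f with hg
  have hSg : S g = -g := by simp [hg, map_smul, hf]
  set w : H := g - u with hw
  have hSw : S w = -g - S u := by simp [hw, map_sub, hSg]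
  have hgg : ⟪g, g⟫ = (lam + γ)⁻¹ * ((lam + γ)⁻¹ * ⟪f, f⟫) := by
    rw [hg, real_inner_smul_left, real_inner_smul_right]
  have hgu : ⟪g, u⟫ = (lam + γ)⁻¹ * ⟪f, u⟫ := by
    simp [hg, real_inner_smul_left]
  have hSug : ⟪S u, g⟫ = -⟪g, u⟫ := by
    rw [hsym u g, hSg, inner_neg_right, real_inner_comm]
  have hww : ⟪w, w⟫ = ⟪g, g⟫ - 2 * ⟪g, u⟫ + ⟪u, u⟫ := by
    rw [hw, inner_sub_left, inner_sub_right, inner_sub_right, real_inner_comm g u]; ring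
  have hSww : ⟪S w, w⟫ = -⟪g, g⟫ + 2 * ⟪g, u⟫ + ⟪S u, u⟫ := by
    rw [hSw, hw]
    simp [inner_sub_left, inner_sub_right, inner_neg_left, hSug, real_inner_comm g u]
    ring
  have h2 : 0 ≤ lam * ⟪w, w⟫ - γ * ⟪S w, w⟫ := by
    have := hSneg w
    have := real_inner_self_nonneg (x := w)
    nlinarith
  have key : lam * ⟪w, w⟫ - γ * ⟪S w, w⟫
      = (lam + γ) * ⟪g, g⟫ - 2 * (lam + γ) * ⟪g, u⟫ + ⟪f, u⟫ := by
    rw [hww, hSww, h1]; ring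
  have hinv : (lam + γ) * (lam + γ)⁻¹ = 1 := mul_inv_cancel₀ (ne_of_gt hpos)
  have hfu : ⟪f, u⟫ ≤ ⟪f, f⟫ / (lam + γ) := by
    rw [key, hgg, hgu] at h2
    have e1 : (lam + γ) * ((lam + γ)⁻¹ * ((lam + γ)⁻¹ * ⟪f, f⟫)) = ⟪f, f⟫ / (lam + γ) := by
      field_simp
    have e2 : 2 * (lam + γ) * ((lam + γ)⁻¹ * ⟪f, u⟫) = 2 * ⟪f, u⟫ := by
      field_simp
    rw [e1, e2] at h2
    linarith
  exact hfu
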